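/- Let γ ∈ ℂ*. The pair U(z) = V(z) = sinh(γz)/√(π sinh(|γ|²)) · e^{-|z|²/2} is an L²(ℂ)-normalized element of the Bargmann-Fock space E satisfying Π(|U|²U) = (1/(4π)) U. -/

import Mathlib

set_option maxHeartbeats 1000000

open MeasureTheory Complex

noncomputable section

/-- The LLL projection Π given by its integral kernel. -/
def Proj (u : ℂ → ℂ) (z : ℂ) : ℂ :=
  (Real.pi : ℂ)⁻¹ * Complex.exp (-((‖z‖ ^ 2 : ℝ) : ℂ) / 2) *
    ∫ w : ℂ, Complex.exp ((starRingEnd ℂ) w * z - ((‖w‖ ^ 2 : ℝ) : ℂ) / 2) * u w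

namespace Stmt18Aux

lemma hsq (w : ℂ) : ((‖w‖^2:ℝ):ℂ) = w * (starRingEnd ℂ) w := by
  simp [Complex.mul_conj, Complex.normSq_eq_norm_sq]

lemma gauss_key (c : ℝ) (a b : ℂ) (p : ℝ × ℝ) :
    Complex.exp (-(c:ℂ)*((‖Complex.measurableEquivRealProd.symm p‖^2:ℝ):ℂ)
      + a*(Complex.measurableEquivRealProd.symm p) + b*((starRingEnd ℂ) (Complex.measurableEquivRealProd.symm p)))
    = Complex.exp (-(c:ℂ)*(p.1:ℂ)^2 + (a+b)*(p.1:ℂ) + 0)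
      * Complex.exp (-(c:ℂ)*(p.2:ℂ)^2 + ((a-b)*I)*(p.2:ℂ) + 0) := by
  rw [← Complex.exp_add]
  congr 1
  have h1 : Complex.measurableEquivRealProd.symm p = (p.1 : ℂ) + (p.2:ℂ)*I := by
    simp only [Complex.measurableEquivRealProd]
    apply Complex.ext <;> simp
  rw [h1]
  have hn : (‖(p.1 : ℂ) + (p.2:ℂ)*I‖^2 : ℝ) = p.1^2 + p.2^2 := by
    simp [Complex.sq_norm, Complex.normSq_apply]; ring
  rw [hn]
  push_cast
  simp only [map_add, map_mul, Complex.conj_ofReal, Complex.conj_I]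
  ring

lemma gauss_integrable (c : ℝ) (hc : 0 < c) (a b : ℂ) :
    Integrable (fun z : ℂ => Complex.exp (-(c:ℂ)*((‖z‖^2:ℝ):ℂ) + a*z + b*((starRingEnd ℂ) z))) := by
  rw [← MeasurePreserving.integrable_comp_emb Complex.volume_preserving_equiv_real_prod.symm
    Complex.measurableEquivRealProd.symm.measurableEmbedding]
  have h : ((fun z : ℂ => Complex.exp (-(c:ℂ)*((‖z‖^2:ℝ):ℂ) + a*z + b*((starRingEnd ℂ) z)))
      ∘ Complex.measurableEquivRealProd.symm)
      = fun p : ℝ × ℝ => Complex.exp (-(c:ℂ)*(p.1:ℂ)^2 + (a+b)*(p.1:ℂ) + 0)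
        * Complex.exp (-(c:ℂ)*(p.2:ℂ)^2 + ((a-b)*I)*(p.2:ℂ) + 0) := by
    funext p; exact gauss_key c a b p
  rw [h]
  exact (integrable_cexp_quadratic' (b := -(c:ℂ)) (by simpa using hc) _ _).mul_prod
    (integrable_cexp_quadratic' (b := -(c:ℂ)) (by simpa using hc) _ _)

lemma gauss_integral (c : ℝ) (hc : 0 < c) (a b : ℂ) :
    ∫ z : ℂ, Complex.exp (-(c:ℂ)*((‖z‖^2:ℝ):ℂ) + a*z + b*((starRingEnd ℂ) z))
      = (Real.pi/c : ℝ) * Complex.exp (a*b/c) := by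
  rw [← MeasurePreserving.integral_comp Complex.volume_preserving_equiv_real_prod.symm
    Complex.measurableEquivRealProd.symm.measurableEmbedding]
  simp_rw [gauss_key c a b]
  rw [MeasureTheory.Measure.volume_eq_prod,
    integral_prod_mul (f := fun t : ℝ => Complex.exp (-(c:ℂ)*(t:ℂ)^2 + (a+b)*(t:ℂ) + 0))
      (g := fun t : ℝ => Complex.exp (-(c:ℂ)*(t:ℂ)^2 + ((a-b)*I)*(t:ℂ) + 0))]
  have hc' : (-(c:ℂ)).re < 0 := by simpa using hc
  rw [integral_cexp_quadratic hc', integral_cexp_quadratic hc']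
  have hb : (Real.pi/c : ℂ) ≠ 0 := by
    simp [Real.pi_ne_zero, ne_of_gt hc]
  have h : (↑Real.pi / -(-(c:ℂ))) = ((Real.pi/c : ℝ) : ℂ) := by push_cast; ring
  rw [h]
  rw [mul_mul_mul_comm, ← Complex.exp_add, ← Complex.cpow_add _ _ (by exact_mod_cast hb)]
  norm_num
  left
  congr 1
  have hcne : (c:ℂ) ≠ 0 := by exact_mod_cast ne_of_gt hc
  have hI : ((a-b)*I)^2 = -(a-b)^2 := by rw [mul_pow, Complex.I_sq]; ring
  rw [hI]
  field_simp
  ring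

lemma pt_norm (γ : ℂ) (C : ℝ) (hC : C ≠ 0) (z : ℂ) :
    ((‖(Complex.sinh (γ * z) / (C:ℂ) * Complex.exp (-((‖z‖ ^ 2 : ℝ) : ℂ) / 2))‖^2 : ℝ) : ℂ)
    = (1/(4*(C:ℂ)^2)) *
      ( Complex.exp (-((1:ℝ):ℂ)*((‖z‖^2:ℝ):ℂ) + γ*z + (starRingEnd ℂ γ)*((starRingEnd ℂ) z))
      - Complex.exp (-((1:ℝ):ℂ)*((‖z‖^2:ℝ):ℂ) + γ*z + (-(starRingEnd ℂ γ))*((starRingEnd ℂ) z))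
      - Complex.exp (-((1:ℝ):ℂ)*((‖z‖^2:ℝ):ℂ) + (-γ)*z + (starRingEnd ℂ γ)*((starRingEnd ℂ) z))
      + Complex.exp (-((1:ℝ):ℂ)*((‖z‖^2:ℝ):ℂ) + (-γ)*z + (-(starRingEnd ℂ γ))*((starRingEnd ℂ) z)) ) := by
  rw [hsq]
  have hconjF : (starRingEnd ℂ) (Complex.exp (-((‖z‖ ^ 2 : ℝ) : ℂ) / 2))
      = Complex.exp (-((‖z‖ ^ 2 : ℝ) : ℂ) / 2) := by
    rw [← Complex.exp_conj]; congr 1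
    simp only [map_div₀, map_neg, Complex.conj_ofReal, map_ofNat]
  have key : ∀ a b : ℂ, Complex.exp (-((1:ℝ):ℂ)*((‖z‖^2:ℝ):ℂ) + a + b)
      = Complex.exp a * Complex.exp b *
        (Complex.exp (-((‖z‖ ^ 2 : ℝ) : ℂ) / 2) * Complex.exp (-((‖z‖ ^ 2 : ℝ) : ℂ) / 2)) := by
    intro a b
    rw [← Complex.exp_add, ← Complex.exp_add, ← Complex.exp_add]; congr 1; push_cast; ring
  have sinh_def : ∀ x : ℂ, Complex.sinh x = (Complex.exp x - Complex.exp (-x))/2 :=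
    fun x => rfl
  simp only [key]
  simp only [map_mul, map_div₀, ← Complex.sinh_conj, hconjF, map_ofNat, Complex.conj_ofReal]
  simp only [map_mul, sinh_def, neg_mul, Complex.exp_neg]
  have h1 := Complex.exp_ne_zero (γ*z)
  have h2 := Complex.exp_ne_zero ((starRingEnd ℂ γ)*((starRingEnd ℂ) z))
  have hC' : (C:ℂ) ≠ 0 := by exact_mod_cast hC
  field_simp
  ring

lemma pt_proj (γ : ℂ) (C : ℝ) (z w : ℂ) :
    Complex.exp ((starRingEnd ℂ) w * z - ((‖w‖ ^ 2 : ℝ) : ℂ) / 2) *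
      (((‖(Complex.sinh (γ * w) / (C:ℂ) * Complex.exp (-((‖w‖ ^ 2 : ℝ) : ℂ) / 2))‖ ^ 2 : ℝ) : ℂ) *
        (Complex.sinh (γ * w) / (C:ℂ) * Complex.exp (-((‖w‖ ^ 2 : ℝ) : ℂ) / 2)))
    = (1/(8*(C:ℂ)^3)) *
      ( Complex.exp (-((2:ℝ):ℂ)*((‖w‖^2:ℝ):ℂ) + (2*γ)*w + (z + (starRingEnd ℂ) γ)*((starRingEnd ℂ) w))
      - Complex.exp (-((2:ℝ):ℂ)*((‖w‖^2:ℝ):ℂ) + (2*γ)*w + (z - (starRingEnd ℂ) γ)*((starRingEnd ℂ) w))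
      - 2*Complex.exp (-((2:ℝ):ℂ)*((‖w‖^2:ℝ):ℂ) + (0:ℂ)*w + (z + (starRingEnd ℂ) γ)*((starRingEnd ℂ) w))
      + 2*Complex.exp (-((2:ℝ):ℂ)*((‖w‖^2:ℝ):ℂ) + (0:ℂ)*w + (z - (starRingEnd ℂ) γ)*((starRingEnd ℂ) w))
      + Complex.exp (-((2:ℝ):ℂ)*((‖w‖^2:ℝ):ℂ) + (-(2*γ))*w + (z + (starRingEnd ℂ) γ)*((starRingEnd ℂ) w))
      - Complex.exp (-((2:ℝ):ℂ)*((‖w‖^2:ℝ):ℂ) + (-(2*γ))*w + (z - (starRingEnd ℂ) γ)*((starRingEnd ℂ) w)) ) := by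
  rw [hsq (Complex.sinh (γ * w) / (C:ℂ) * Complex.exp (-((‖w‖ ^ 2 : ℝ) : ℂ) / 2))]
  have hconjF : (starRingEnd ℂ) (Complex.exp (-((‖w‖ ^ 2 : ℝ) : ℂ) / 2))
      = Complex.exp (-((‖w‖ ^ 2 : ℝ) : ℂ) / 2) := by
    rw [← Complex.exp_conj]; congr 1
    simp only [map_div₀, map_neg, Complex.conj_ofReal, map_ofNat]
  have key : ∀ a b : ℂ, Complex.exp (-((2:ℝ):ℂ)*((‖w‖^2:ℝ):ℂ) + a + b)
      = Complex.exp a * Complex.exp b *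
        (Complex.exp (-((‖w‖ ^ 2 : ℝ) : ℂ) / 2) * Complex.exp (-((‖w‖ ^ 2 : ℝ) : ℂ) / 2)
          * Complex.exp (-((‖w‖ ^ 2 : ℝ) : ℂ) / 2) * Complex.exp (-((‖w‖ ^ 2 : ℝ) : ℂ) / 2)) := by
    intro a b
    simp only [← Complex.exp_add]; congr 1; push_cast; ring
  have sinh_def : ∀ x : ℂ, Complex.sinh x = (Complex.exp x - Complex.exp (-x))/2 :=
    fun x => rfl
  rw [mul_comm ((starRingEnd ℂ) w) z]
  simp only [key]
  simp only [map_mul, map_div₀, ← Complex.sinh_conj, hconjF, map_ofNat, Complex.conj_ofReal]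
  simp only [sinh_def, show ∀ x : ℂ, (2*γ)*x = γ*x + γ*x from fun x => by ring,
    neg_mul, neg_add, add_mul, sub_mul, zero_mul, sub_eq_add_neg, neg_div,
    Complex.exp_add, Complex.exp_zero]
  have hPM : Complex.exp (γ*w) * Complex.exp (-(γ*w)) = 1 := by
    rw [← Complex.exp_add]; simp
  linear_combination (-(Complex.exp (z * ((starRingEnd ℂ) w)) *
      Complex.exp (-(((‖w‖^2:ℝ):ℂ)/2))^4 *
      (Complex.exp ((starRingEnd ℂ) γ * ((starRingEnd ℂ) w))
        - Complex.exp (-((starRingEnd ℂ) γ * ((starRingEnd ℂ) w))))/(4*(C:ℂ)^3))) * hPM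

lemma final_alg (pi C F S A B D E P M Q R : ℂ) (hpi : pi ≠ 0) (hC : C ≠ 0)
    (hA : A = P*Q) (hB : B = P*R) (hD : D = M*R) (hE : E = M*Q) (hS : S = (P - M)/2)
    (hrel : C^2 = pi*((Q - R)/2)) :
    pi⁻¹ * F * (1/(8*C^3) * (pi/2*A - pi/2*B - 2*(pi/2) + 2*(pi/2) + pi/2*D - pi/2*E))
    = 1/(4*pi)*(S/C*F) := by
  subst hA hB hD hE hS
  have hQ : Q = R + 2*C^2/pi := by
    rw [hrel]; field_simp; ring
  subst hQ
  have hp3 : pi^3 * pi⁻¹^3 = 1 := by rw [← mul_pow, mul_inv_cancel₀ hpi, one_pow]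
  have hc3 : C^3 * C⁻¹^3 = 1 := by rw [← mul_pow, mul_inv_cancel₀ hC, one_pow]
  field_simp
  ring

end Stmt18Aux

open Stmt18Aux

/-- U(z) = sinh(γz) e^{-|z|²/2}/√(π sinh|γ|²) is a normalized element of the
Bargmann-Fock space satisfying Π(|U|²U) = U/(4π). -/
theorem stmt18 (γ : ℂ) (hγ : γ ≠ 0) (U : ℂ → ℂ)
    (hU : ∀ z, U z = Complex.sinh (γ * z)
        / ((Real.sqrt (Real.pi * Real.sinh (‖γ‖ ^ 2)) : ℝ) : ℂ)
        * Complex.exp (-((‖z‖ ^ 2 : ℝ) : ℂ) / 2)) :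
    (∃ f : ℂ → ℂ, Differentiable ℂ f ∧
        ∀ z, U z = f z * Complex.exp (-((‖z‖ ^ 2 : ℝ) : ℂ) / 2))
    ∧ MemLp U 2 volume
    ∧ (∫ z : ℂ, ‖U z‖ ^ 2) = 1
    ∧ ∀ z : ℂ, Proj (fun w => ((‖U w‖ ^ 2 : ℝ) : ℂ) * U w) z
        = (1 / (4 * (Real.pi : ℂ))) * U z := by
  set C : ℝ := Real.sqrt (Real.pi * Real.sinh (‖γ‖^2)) with hCdef
  have ht0 : 0 < ‖γ‖^2 := pow_pos (norm_pos_iff.mpr hγ) 2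
  have hs0 : 0 < Real.sinh (‖γ‖^2) := Real.sinh_pos_iff.mpr ht0
  have hC0 : 0 < C := Real.sqrt_pos.mpr (by positivity)
  have hC : C ≠ 0 := ne_of_gt hC0
  have hC' : (C:ℂ) ≠ 0 := by exact_mod_cast hC
  have hC2 : (C:ℝ)^2 = Real.pi * Real.sinh (‖γ‖^2) := Real.sq_sqrt (by positivity)
  have hC2c : ((C:ℝ):ℂ)^2 = (Real.pi:ℂ) * ((Real.sinh (‖γ‖^2) : ℝ):ℂ) := by
    rw [show ((C:ℝ):ℂ)^2 = ((C^2 : ℝ):ℂ) by push_cast; ring, hC2, Complex.ofReal_mul]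
  have hsinh : ((Real.sinh (‖γ‖^2) : ℝ) : ℂ)
      = (Complex.exp (((‖γ‖^2 : ℝ):ℂ)) - Complex.exp (-((‖γ‖^2 : ℝ):ℂ)))/2 := by
    rw [Real.sinh_eq]; push_cast; ring
  have hπ : (Real.pi : ℂ) ≠ 0 := by exact_mod_cast Real.pi_ne_zero
  have hγγ' : ((‖γ‖^2 : ℝ):ℂ) = γ * (starRingEnd ℂ) γ := hsq γ
  have hsinhm : ((Real.sinh (‖γ‖^2) : ℝ) : ℂ)
      = (Complex.exp (γ * (starRingEnd ℂ) γ) - Complex.exp (-(γ * (starRingEnd ℂ) γ)))/2 := by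
    rw [Real.sinh_eq, Complex.ofReal_div, Complex.ofReal_sub, Complex.ofReal_exp,
      Complex.ofReal_exp, Complex.ofReal_neg, Complex.ofReal_ofNat, hγγ']
  have hγγ : γ * (starRingEnd ℂ) γ = ((‖γ‖^2 : ℝ):ℂ) := (hsq γ).symm
  -- the complex-valued |U|² decomposition
  have hptn : ∀ z : ℂ, ((‖U z‖^2:ℝ):ℂ)
      = (1/(4*(C:ℂ)^2)) *
      ( Complex.exp (-((1:ℝ):ℂ)*((‖z‖^2:ℝ):ℂ) + γ*z + (starRingEnd ℂ γ)*((starRingEnd ℂ) z))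
      - Complex.exp (-((1:ℝ):ℂ)*((‖z‖^2:ℝ):ℂ) + γ*z + (-(starRingEnd ℂ γ))*((starRingEnd ℂ) z))
      - Complex.exp (-((1:ℝ):ℂ)*((‖z‖^2:ℝ):ℂ) + (-γ)*z + (starRingEnd ℂ γ)*((starRingEnd ℂ) z))
      + Complex.exp (-((1:ℝ):ℂ)*((‖z‖^2:ℝ):ℂ) + (-γ)*z + (-(starRingEnd ℂ γ))*((starRingEnd ℂ) z)) ) := by
    intro z
    rw [hU z]
    exact pt_norm γ C hC z
  have i1 := gauss_integrable 1 one_pos γ ((starRingEnd ℂ) γ)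
  have i2 := gauss_integrable 1 one_pos γ (-((starRingEnd ℂ) γ))
  have i3 := gauss_integrable 1 one_pos (-γ) ((starRingEnd ℂ) γ)
  have i4 := gauss_integrable 1 one_pos (-γ) (-((starRingEnd ℂ) γ))
  -- complex normalization integral
  have hIc : (∫ z : ℂ, ((‖U z‖^2:ℝ):ℂ)) = 1 := by
    rw [show (fun z : ℂ => ((‖U z‖^2:ℝ):ℂ)) = fun z =>
      (1/(4*(C:ℂ)^2)) *
      ( Complex.exp (-((1:ℝ):ℂ)*((‖z‖^2:ℝ):ℂ) + γ*z + (starRingEnd ℂ γ)*((starRingEnd ℂ) z))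
      - Complex.exp (-((1:ℝ):ℂ)*((‖z‖^2:ℝ):ℂ) + γ*z + (-(starRingEnd ℂ γ))*((starRingEnd ℂ) z))
      - Complex.exp (-((1:ℝ):ℂ)*((‖z‖^2:ℝ):ℂ) + (-γ)*z + (starRingEnd ℂ γ)*((starRingEnd ℂ) z))
      + Complex.exp (-((1:ℝ):ℂ)*((‖z‖^2:ℝ):ℂ) + (-γ)*z + (-(starRingEnd ℂ γ))*((starRingEnd ℂ) z)) )
      from funext hptn]
    have i12 : Integrable (fun z : ℂ => Complex.exp (-((1:ℝ):ℂ)*((‖z‖^2:ℝ):ℂ) + γ*z + (starRingEnd ℂ γ)*((starRingEnd ℂ) z)) - Complex.exp (-((1:ℝ):ℂ)*((‖z‖^2:ℝ):ℂ) + γ*z + (-(starRingEnd ℂ γ))*((starRingEnd ℂ) z))) volume := i1.sub i2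
    have i123 : Integrable (fun z : ℂ => (Complex.exp (-((1:ℝ):ℂ)*((‖z‖^2:ℝ):ℂ) + γ*z + (starRingEnd ℂ γ)*((starRingEnd ℂ) z)) - Complex.exp (-((1:ℝ):ℂ)*((‖z‖^2:ℝ):ℂ) + γ*z + (-(starRingEnd ℂ γ))*((starRingEnd ℂ) z))) - Complex.exp (-((1:ℝ):ℂ)*((‖z‖^2:ℝ):ℂ) + (-γ)*z + (starRingEnd ℂ γ)*((starRingEnd ℂ) z))) volume := i12.sub i3
    rw [integral_const_mul _ _, integral_add i123 i4,
      integral_sub i12 i3, integral_sub i1 i2,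
      gauss_integral 1 one_pos γ ((starRingEnd ℂ) γ),
      gauss_integral 1 one_pos γ (-((starRingEnd ℂ) γ)),
      gauss_integral 1 one_pos (-γ) ((starRingEnd ℂ) γ),
      gauss_integral 1 one_pos (-γ) (-((starRingEnd ℂ) γ))]
    rw [show γ * ((starRingEnd ℂ) γ) / ((1:ℝ):ℂ) = γ * ((starRingEnd ℂ) γ) by push_cast; ring,
      show γ * (-((starRingEnd ℂ) γ)) / ((1:ℝ):ℂ) = -(γ * ((starRingEnd ℂ) γ)) by push_cast; ring,
      show (-γ) * ((starRingEnd ℂ) γ) / ((1:ℝ):ℂ) = -(γ * ((starRingEnd ℂ) γ)) by push_cast; ring,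
      show (-γ) * (-((starRingEnd ℂ) γ)) / ((1:ℝ):ℂ) = γ * ((starRingEnd ℂ) γ) by push_cast; ring]
    rw [div_one]
    rw [one_div, inv_mul_eq_div, div_eq_one_iff_eq (by simp [hC'] : (4:ℂ)*((C:ℝ):ℂ)^2 ≠ 0)]
    rw [hC2c, hsinhm]
    push_cast
    ring
  refine ⟨⟨fun z => Complex.sinh (γ * z) / (C:ℂ), ?_, fun z => hU z⟩, ?_, ?_, ?_⟩
  · exact (Complex.differentiable_sinh.comp ((differentiable_id).const_mul γ)).div_const _
  · -- Memℒp
    have hUcont : Continuous U := by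
      rw [show U = fun z => Complex.sinh (γ * z) / ((C:ℝ):ℂ)
          * Complex.exp (-((‖z‖ ^ 2 : ℝ) : ℂ) / 2) from funext hU]
      fun_prop
    have hGint : Integrable (fun z : ℂ => ((‖U z‖^2:ℝ):ℂ)) := by
      rw [show (fun z : ℂ => ((‖U z‖^2:ℝ):ℂ)) = fun z =>
        (1/(4*(C:ℂ)^2)) *
        ( Complex.exp (-((1:ℝ):ℂ)*((‖z‖^2:ℝ):ℂ) + γ*z + (starRingEnd ℂ γ)*((starRingEnd ℂ) z))
        - Complex.exp (-((1:ℝ):ℂ)*((‖z‖^2:ℝ):ℂ) + γ*z + (-(starRingEnd ℂ γ))*((starRingEnd ℂ) z))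
        - Complex.exp (-((1:ℝ):ℂ)*((‖z‖^2:ℝ):ℂ) + (-γ)*z + (starRingEnd ℂ γ)*((starRingEnd ℂ) z))
        + Complex.exp (-((1:ℝ):ℂ)*((‖z‖^2:ℝ):ℂ) + (-γ)*z + (-(starRingEnd ℂ γ))*((starRingEnd ℂ) z)) )
        from funext hptn]
      exact (((i1.sub i2).sub i3).add i4).const_mul _
    have hInt2 : Integrable (fun z : ℂ => ‖U z‖^2) := by
      have h := hGint.re
      simpa [← Complex.ofReal_pow] using h
    exact (memLp_two_iff_integrable_sq_norm hUcont.aestronglyMeasurable).mpr hInt2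
  · -- normalization
    have h1 : ((∫ z : ℂ, ‖U z‖^2 : ℝ) : ℂ) = ∫ z : ℂ, ((‖U z‖^2:ℝ):ℂ) :=
      (integral_ofReal).symm
    rw [hIc] at h1
    exact_mod_cast h1
  · -- projection identity
    intro z
    have hptw : ∀ w : ℂ,
        Complex.exp ((starRingEnd ℂ) w * z - ((‖w‖ ^ 2 : ℝ) : ℂ) / 2) *
          (((‖U w‖ ^ 2 : ℝ) : ℂ) * U w)
        = (1/(8*(C:ℂ)^3)) *
      ( Complex.exp (-((2:ℝ):ℂ)*((‖w‖^2:ℝ):ℂ) + (2*γ)*w + (z + (starRingEnd ℂ) γ)*((starRingEnd ℂ) w))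
      - Complex.exp (-((2:ℝ):ℂ)*((‖w‖^2:ℝ):ℂ) + (2*γ)*w + (z - (starRingEnd ℂ) γ)*((starRingEnd ℂ) w))
      - 2*Complex.exp (-((2:ℝ):ℂ)*((‖w‖^2:ℝ):ℂ) + (0:ℂ)*w + (z + (starRingEnd ℂ) γ)*((starRingEnd ℂ) w))
      + 2*Complex.exp (-((2:ℝ):ℂ)*((‖w‖^2:ℝ):ℂ) + (0:ℂ)*w + (z - (starRingEnd ℂ) γ)*((starRingEnd ℂ) w))
      + Complex.exp (-((2:ℝ):ℂ)*((‖w‖^2:ℝ):ℂ) + (-(2*γ))*w + (z + (starRingEnd ℂ) γ)*((starRingEnd ℂ) w))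
      - Complex.exp (-((2:ℝ):ℂ)*((‖w‖^2:ℝ):ℂ) + (-(2*γ))*w + (z - (starRingEnd ℂ) γ)*((starRingEnd ℂ) w)) ) := by
      intro w
      rw [hU w]
      exact pt_proj γ C z w
    have two_pos' : (0:ℝ) < 2 := two_pos
    have j1 := gauss_integrable 2 two_pos' (2*γ) (z + (starRingEnd ℂ) γ)
    have j2 := gauss_integrable 2 two_pos' (2*γ) (z - (starRingEnd ℂ) γ)
    have j3 := (gauss_integrable 2 two_pos' (0:ℂ) (z + (starRingEnd ℂ) γ)).const_mul (2:ℂ)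
    have j4 := (gauss_integrable 2 two_pos' (0:ℂ) (z - (starRingEnd ℂ) γ)).const_mul (2:ℂ)
    have j5 := gauss_integrable 2 two_pos' (-(2*γ)) (z + (starRingEnd ℂ) γ)
    have j6 := gauss_integrable 2 two_pos' (-(2*γ)) (z - (starRingEnd ℂ) γ)
    have hint : (∫ w : ℂ, Complex.exp ((starRingEnd ℂ) w * z - ((‖w‖ ^ 2 : ℝ) : ℂ) / 2) *
          (((‖U w‖ ^ 2 : ℝ) : ℂ) * U w))
        = (1/(8*(C:ℂ)^3)) *
          ( ((Real.pi/2 : ℝ):ℂ) * Complex.exp (γ*z + γ * ((starRingEnd ℂ) γ))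
          - ((Real.pi/2 : ℝ):ℂ) * Complex.exp (γ*z - γ * ((starRingEnd ℂ) γ))
          - 2*(((Real.pi/2 : ℝ):ℂ))
          + 2*(((Real.pi/2 : ℝ):ℂ))
          + ((Real.pi/2 : ℝ):ℂ) * Complex.exp (-(γ*z) - γ * ((starRingEnd ℂ) γ))
          - ((Real.pi/2 : ℝ):ℂ) * Complex.exp (-(γ*z) + γ * ((starRingEnd ℂ) γ)) ) := by
      rw [show (fun w : ℂ => Complex.exp ((starRingEnd ℂ) w * z - ((‖w‖ ^ 2 : ℝ) : ℂ) / 2) *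
          (((‖U w‖ ^ 2 : ℝ) : ℂ) * U w)) = fun w => (1/(8*(C:ℂ)^3)) *
      ( Complex.exp (-((2:ℝ):ℂ)*((‖w‖^2:ℝ):ℂ) + (2*γ)*w + (z + (starRingEnd ℂ) γ)*((starRingEnd ℂ) w))
      - Complex.exp (-((2:ℝ):ℂ)*((‖w‖^2:ℝ):ℂ) + (2*γ)*w + (z - (starRingEnd ℂ) γ)*((starRingEnd ℂ) w))
      - 2*Complex.exp (-((2:ℝ):ℂ)*((‖w‖^2:ℝ):ℂ) + (0:ℂ)*w + (z + (starRingEnd ℂ) γ)*((starRingEnd ℂ) w))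
      + 2*Complex.exp (-((2:ℝ):ℂ)*((‖w‖^2:ℝ):ℂ) + (0:ℂ)*w + (z - (starRingEnd ℂ) γ)*((starRingEnd ℂ) w))
      + Complex.exp (-((2:ℝ):ℂ)*((‖w‖^2:ℝ):ℂ) + (-(2*γ))*w + (z + (starRingEnd ℂ) γ)*((starRingEnd ℂ) w))
      - Complex.exp (-((2:ℝ):ℂ)*((‖w‖^2:ℝ):ℂ) + (-(2*γ))*w + (z - (starRingEnd ℂ) γ)*((starRingEnd ℂ) w)) )
        from funext hptw]
      have k12 : Integrable (fun w : ℂ => Complex.exp (-((2:ℝ):ℂ)*((‖w‖^2:ℝ):ℂ) + (2*γ)*w + (z + (starRingEnd ℂ) γ)*((starRingEnd ℂ) w)) - Complex.exp (-((2:ℝ):ℂ)*((‖w‖^2:ℝ):ℂ) + (2*γ)*w + (z - (starRingEnd ℂ) γ)*((starRingEnd ℂ) w))) volume := j1.sub j2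
      have k123 : Integrable (fun w : ℂ => (Complex.exp (-((2:ℝ):ℂ)*((‖w‖^2:ℝ):ℂ) + (2*γ)*w + (z + (starRingEnd ℂ) γ)*((starRingEnd ℂ) w)) - Complex.exp (-((2:ℝ):ℂ)*((‖w‖^2:ℝ):ℂ) + (2*γ)*w + (z - (starRingEnd ℂ) γ)*((starRingEnd ℂ) w))) - 2*Complex.exp (-((2:ℝ):ℂ)*((‖w‖^2:ℝ):ℂ) + (0:ℂ)*w + (z + (starRingEnd ℂ) γ)*((starRingEnd ℂ) w))) volume := k12.sub j3
      have k1234 : Integrable (fun w : ℂ => ((Complex.exp (-((2:ℝ):ℂ)*((‖w‖^2:ℝ):ℂ) + (2*γ)*w + (z + (starRingEnd ℂ) γ)*((starRingEnd ℂ) w)) - Complex.exp (-((2:ℝ):ℂ)*((‖w‖^2:ℝ):ℂ) + (2*γ)*w + (z - (starRingEnd ℂ) γ)*((starRingEnd ℂ) w))) - 2*Complex.exp (-((2:ℝ):ℂ)*((‖w‖^2:ℝ):ℂ) + (0:ℂ)*w + (z + (starRingEnd ℂ) γ)*((starRingEnd ℂ) w))) + 2*Complex.exp (-((2:ℝ):ℂ)*((‖w‖^2:ℝ):ℂ)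 + (0:ℂ)*w + (z - (starRingEnd ℂ) γ)*((starRingEnd ℂ) w))) volume := k123.add j4
      have k12345 : Integrable (fun w : ℂ => (((Complex.exp (-((2:ℝ):ℂ)*((‖w‖^2:ℝ):ℂ) + (2*γ)*w + (z + (starRingEnd ℂ) γ)*((starRingEnd ℂ) w)) - Complex.exp (-((2:ℝ):ℂ)*((‖w‖^2:ℝ):ℂ) + (2*γ)*w + (z - (starRingEnd ℂ) γ)*((starRingEnd ℂ) w))) - 2*Complex.exp (-((2:ℝ):ℂ)*((‖w‖^2:ℝ):ℂ) + (0:ℂ)*w + (z + (starRingEnd ℂ) γ)*((starRingEnd ℂ) w))) + 2*Complex.exp (-((2:ℝ):ℂ)*((‖w‖^2:ℝ):ℂ) + (0:ℂ)*w + (z - (starRingEnd ℂ) γ)*((starRingEnd ℂ) w))) + Complex.exp (-((2:ℝ):ℂ)*((‖w‖^2:ℝ):ℂ) + (-(2*γ))*w + (z + (starRingEnd ℂ) γ)*((starRingEnd ℂ) w))) volume := k1234.add j5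
      rw [integral_const_mul _ _,
        integral_sub k12345 j6,
        integral_add k1234 j5,
        integral_add k123 j4,
        integral_sub k12 j3,
        integral_sub j1 j2,
        integral_const_mul _ _, integral_const_mul _ _,
        gauss_integral 2 two_pos' (2*γ) (z + (starRingEnd ℂ) γ),
        gauss_integral 2 two_pos' (2*γ) (z - (starRingEnd ℂ) γ),
        gauss_integral 2 two_pos' (0:ℂ) (z + (starRingEnd ℂ) γ),
        gauss_integral 2 two_pos' (0:ℂ) (z - (starRingEnd ℂ) γ),
        gauss_integral 2 two_pos' (-(2*γ)) (z + (starRingEnd ℂ) γ),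
        gauss_integral 2 two_pos' (-(2*γ)) (z - (starRingEnd ℂ) γ)]
      rw [show (2*γ) * (z + (starRingEnd ℂ) γ) / ((2:ℝ):ℂ)
            = γ*z + γ * ((starRingEnd ℂ) γ) by push_cast; ring,
        show (2*γ) * (z - (starRingEnd ℂ) γ) / ((2:ℝ):ℂ)
            = γ*z - γ * ((starRingEnd ℂ) γ) by push_cast; ring,
        show (-(2*γ)) * (z + (starRingEnd ℂ) γ) / ((2:ℝ):ℂ)
            = -(γ*z) - γ * ((starRingEnd ℂ) γ) by push_cast; ring,
        show (-(2*γ)) * (z - (starRingEnd ℂ) γ) / ((2:ℝ):ℂ)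
            = -(γ*z) + γ * ((starRingEnd ℂ) γ) by push_cast; ring]
      simp only [zero_mul, zero_div, Complex.exp_zero, mul_one]
    simp only [Proj]
    rw [hint, hU z]
    have sinh_def : ∀ x : ℂ, Complex.sinh x = (Complex.exp x - Complex.exp (-x))/2 :=
      fun x => rfl
    rw [show ((Real.pi/2 : ℝ):ℂ) = (Real.pi:ℂ)/2 by push_cast; ring]
    have hrel : ((C:ℝ):ℂ)^2 = (Real.pi:ℂ) *
        ((Complex.exp (γ * (starRingEnd ℂ) γ) - Complex.exp (-(γ * (starRingEnd ℂ) γ)))/2) := by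
      rw [hC2c, hsinhm]
    exact final_alg (Real.pi:ℂ) ((C:ℝ):ℂ) (Complex.exp (-((‖z‖^2:ℝ):ℂ)/2))
      (Complex.sinh (γ*z)) _ _ _ _
      (Complex.exp (γ*z)) (Complex.exp (-(γ*z)))
      (Complex.exp (γ * (starRingEnd ℂ) γ)) (Complex.exp (-(γ * (starRingEnd ℂ) γ)))
      hπ hC'
      (by rw [Complex.exp_add])
      (by rw [sub_eq_add_neg, Complex.exp_add])
      (by rw [sub_eq_add_neg, Complex.exp_add])
      (by rw [Complex.exp_add])
      (sinh_def (γ*z))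
      hrel
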